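/- Let 0 < a < b, σ1, σ2 > 0, ρ ∈ (−1, 1), and let f0 : ℝ → ℝ^{p0}, g1 : ℝ → ℝ^{q1} and g2 : ℝ → ℝ^{q2} be continuously differentiable on [a, b]. Let Σ = [[σ1², ρσ1σ2], [ρσ1σ2, σ2²]] and let F : ℝ → ℝ^{(p0+q1+q2)×2} be the matrix whose first column is (f0(t)ᵀ, g1(t)ᵀ, 0)ᵀ and whose second column is (f0(t)ᵀ, 0, g2(t)ᵀ)ᵀ. Define the joint information matrix M := ∫_a^b Ḟ(t) Σ⁻¹ Ḟ(t)ᵀ dt + (1/a)·F(a) Σ⁻¹ F(a)ᵀ and the marginal information matrix M^{(1)} := ∫_a^b ḣ(t) ḣ(t)ᵀ dt + (1/a)·h(a) h(a)ᵀ, where h(t) := (f0(t)ᵀ, g1(t)ᵀ)ᵀ ∈ ℝ^{p0+q1}. If M and M^{(1)} are invertible, then σ1²·(M^{(1)})⁻¹ minus the (p0+q1)×(p0+q1) submatrix of M⁻¹ corresponding to the first p0+q1 rows and columns is positive semidefinite. -/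

import Mathlib

open Matrix MeasureTheory intervalIntegral

section Aux

lemma intInt_of_eqOn_Ioo {a b : ℝ} (hab : a ≤ b) {f g : ℝ → ℝ}
    (hg : ContinuousOn g (Set.Icc a b)) (hfg : ∀ t ∈ Set.Ioo a b, f t = g t) :
    IntervalIntegrable f MeasureTheory.volume a b := by
  rw [intervalIntegrable_iff_integrableOn_Ioc_of_le hab,
    integrableOn_Ioc_iff_integrableOn_Ioo]
  have hgint : IntegrableOn g (Set.Ioo a b) volume :=
    hg.integrableOn_Icc.mono_set Set.Ioo_subset_Icc_self
  exact hgint.congr_fun (fun t ht => (hfg t ht).symm) measurableSet_Ioo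

lemma sig_quad (σ1 σ2 ρ : ℝ) (hσ1 : 0 < σ1) (hσ2 : 0 < σ2)
    (hρ : ρ ∈ Set.Ioo (-1:ℝ) 1) (v : Fin 2 → ℝ) :
    (v 0)^2 ≤ σ1^2 * (v ⬝ᵥ ((!![σ1^2, ρ*σ1*σ2; ρ*σ1*σ2, σ2^2])⁻¹ *ᵥ v)) := by
  have hρ2 : ρ^2 < 1 := by nlinarith [hρ.1, hρ.2]
  have hd : (0:ℝ) < σ1^2*σ2^2 - ρ*σ1*σ2*(ρ*σ1*σ2) := by
    nlinarith [mul_pos (mul_pos (pow_pos hσ1 2) (pow_pos hσ2 2))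
      (show (0:ℝ) < 1 - ρ^2 by linarith)]
  rw [Matrix.inv_def]
  simp [Matrix.det_fin_two_of, Matrix.adjugate_fin_two, Matrix.mulVec, dotProduct,
    Fin.sum_univ_two, Ring.inverse_eq_inv, Matrix.vecHead, Matrix.vecTail]
  set d := σ1^2*σ2^2 - ρ*σ1*σ2*(ρ*σ1*σ2) with hdd
  have hd' : d ≠ 0 := ne_of_gt hd
  have key : (σ1 ^ 2 * (v 0 * (d⁻¹ * σ2 ^ 2 * v 0 + -(d⁻¹ * (ρ * σ1 * σ2) * v 1))
      + v 1 * (-(d⁻¹ * (ρ * σ1 * σ2) * v 0) + d⁻¹ * σ1 ^ 2 * v 1))) - (v 0)^2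
      = d⁻¹ * (ρ*σ1*σ2*(v 0) - σ1^2*(v 1))^2 := by
    field_simp
    ring
  have hpos : 0 ≤ d⁻¹ * (ρ*σ1*σ2*(v 0) - σ1^2*(v 1))^2 :=
    mul_nonneg (inv_nonneg.2 hd.le) (sq_nonneg _)
  linarith [key, hpos]

lemma quad_integral {n : Type*} [Fintype n] {a b : ℝ} (A : ℝ → Matrix n n ℝ)
    (hA : ∀ i j, IntervalIntegrable (fun t => A t i j) volume a b) (z : n → ℝ) :
    z ⬝ᵥ ((Matrix.of fun i j => ∫ t in a..b, A t i j) *ᵥ z)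
      = ∫ t in a..b, z ⬝ᵥ (A t *ᵥ z) := by
  have expand : ∀ (B : Matrix n n ℝ), z ⬝ᵥ (B *ᵥ z)
      = ∑ i, ∑ j, z i * (B i j * z j) := by
    intro B
    simp only [dotProduct, Matrix.mulVec, Finset.mul_sum]
  rw [expand]
  simp only [Matrix.of_apply]
  calc ∑ i, ∑ j, z i * ((∫ t in a..b, A t i j) * z j)
      = ∑ i, ∑ j, ∫ t in a..b, z i * (A t i j * z j) := by
        refine Finset.sum_congr rfl fun i _ => Finset.sum_congr rfl fun j _ => ?_
        rw [← intervalIntegral.integral_mul_const, ← intervalIntegral.integral_const_mul]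
    _ = ∑ i, ∫ t in a..b, ∑ j, z i * (A t i j * z j) := by
        have h2 : ∀ i : n, IntervalIntegrable (fun t => ∑ j, z i * (A t i j * z j))
            volume a b := by
          intro i
          have H := IntervalIntegrable.sum (μ := volume) (a := a) (b := b) Finset.univ
            (f := fun (j : n) => fun t => z i * (A t i j * z j))
            (fun j _ => ((hA i j).mul_const (z j)).const_mul (z i))
          have heq : (∑ j : n, fun t => z i * (A t i j * z j))
              = fun t => ∑ j : n, z i * (A t i j * z j) := by
            ext t; simp
          rwa [heq] at H
        exact Finset.sum_congr rfl fun i _ => (intervalIntegral.integral_finset_sum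
          (fun j _ => ((hA i j).mul_const (z j)).const_mul (z i))).symm
    _ = ∫ t in a..b, ∑ i, ∑ j, z i * (A t i j * z j) := by
        have h2 : ∀ i : n, IntervalIntegrable (fun t => ∑ j, z i * (A t i j * z j))
            volume a b := by
          intro i
          have H := IntervalIntegrable.sum (μ := volume) (a := a) (b := b) Finset.univ
            (f := fun (j : n) => fun t => z i * (A t i j * z j))
            (fun j _ => ((hA i j).mul_const (z j)).const_mul (z i))
          have heq : (∑ j : n, fun t => z i * (A t i j * z j))
              = fun t => ∑ j : n, z i * (A t i j * z j) := by
            ext t; simp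
          rwa [heq] at H
        rw [intervalIntegral.integral_finset_sum (fun i _ => h2 i)]
    _ = ∫ t in a..b, z ⬝ᵥ (A t *ᵥ z) := by
        refine intervalIntegral.integral_congr fun t _ => ?_
        rw [expand]

lemma vecMulVec_quad {n : Type*} [Fintype n] (u z : n → ℝ) :
    z ⬝ᵥ ((Matrix.vecMulVec u u) *ᵥ z) = (u ⬝ᵥ z)^2 := by
  simp only [dotProduct, Matrix.mulVec, Matrix.vecMulVec_apply, Finset.mul_sum, sq,
    Finset.sum_mul]
  rw [Finset.sum_comm]
  refine Finset.sum_congr rfl fun i _ => Finset.sum_congr rfl fun j _ => ?_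
  ring

end Aux

/-- Theorem 3.3 (models sharing the common parameter `θ⁽⁰⁾`): the covariance of the
BLUE of `θ⁽¹⁾ = (θ⁽⁰⁾, θ̃⁽¹⁾)` from simultaneous estimation in the two dependent groups
(the leading `(p0+q1) × (p0+q1)` block of `M⁻¹`) is bounded above, in the Loewner
ordering, by the covariance `σ1² (M⁽¹⁾)⁻¹` obtained from the first group alone. -/
theorem simultaneous_estimation_common_parameters
    (p0 q1 q2 : ℕ) (a b : ℝ) (ha : 0 < a) (hab : a < b)
    (σ1 σ2 ρ : ℝ) (hσ1 : 0 < σ1) (hσ2 : 0 < σ2) (hρ : ρ ∈ Set.Ioo (-1 : ℝ) 1)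
    (Sig : Matrix (Fin 2) (Fin 2) ℝ)
    (hSig : Sig = !![σ1 ^ 2, ρ * σ1 * σ2; ρ * σ1 * σ2, σ2 ^ 2])
    (f0 : ℝ → Fin p0 → ℝ) (g1 : ℝ → Fin q1 → ℝ) (g2 : ℝ → Fin q2 → ℝ)
    (hf0 : ∀ i, ContDiffOn ℝ 1 (fun t => f0 t i) (Set.Icc a b))
    (hg1 : ∀ i, ContDiffOn ℝ 1 (fun t => g1 t i) (Set.Icc a b))
    (hg2 : ∀ i, ContDiffOn ℝ 1 (fun t => g2 t i) (Set.Icc a b))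
    (F : ℝ → Matrix ((Fin p0 ⊕ Fin q1) ⊕ Fin q2) (Fin 2) ℝ)
    (hF : ∀ t, F t = Matrix.of fun i j => Sum.elim
        (Sum.elim (fun i0 => f0 t i0) (fun i1 => if j = 0 then g1 t i1 else 0))
        (fun i2 => if j = 1 then g2 t i2 else 0) i)
    (Fdot : ℝ → Matrix ((Fin p0 ⊕ Fin q1) ⊕ Fin q2) (Fin 2) ℝ)
    (hFdot : ∀ t i j, Fdot t i j = deriv (fun s => F s i j) t)
    (h : ℝ → Fin p0 ⊕ Fin q1 → ℝ)
    (hh : ∀ t, h t = Sum.elim (f0 t) (g1 t))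
    (hdot : ℝ → Fin p0 ⊕ Fin q1 → ℝ)
    (hhdot : ∀ t i, hdot t i = deriv (fun s => h s i) t)
    (M : Matrix ((Fin p0 ⊕ Fin q1) ⊕ Fin q2) ((Fin p0 ⊕ Fin q1) ⊕ Fin q2) ℝ)
    (hM : M = (Matrix.of fun i j => ∫ t in a..b, (Fdot t * Sig⁻¹ * (Fdot t)ᵀ) i j)
        + (1 / a) • (F a * Sig⁻¹ * (F a)ᵀ))
    (M1 : Matrix (Fin p0 ⊕ Fin q1) (Fin p0 ⊕ Fin q1) ℝ)
    (hM1 : M1 = (Matrix.of fun i j => ∫ t in a..b, hdot t i * hdot t j)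
        + (1 / a) • Matrix.vecMulVec (h a) (h a))
    (hMunit : IsUnit M) (hM1unit : IsUnit M1) :
    (σ1 ^ 2 • M1⁻¹ - (M⁻¹).toBlocks₁₁).PosSemidef := by
  have habl : a ≤ b := hab.le
  -- smoothness of the entries of F and h
  have hFsm : ∀ i j, ContDiffOn ℝ 1 (fun s => F s i j) (Set.Icc a b) := by
    intro i j
    have he : (fun s => F s i j) = fun s => Sum.elim
        (Sum.elim (fun i0 => f0 s i0) (fun i1 => if j = 0 then g1 s i1 else 0))
        (fun i2 => if j = 1 then g2 s i2 else 0) i := by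
      funext s; rw [hF]; rfl
    rw [he]
    rcases i with (i0 | i1) | i2
    · simpa using hf0 i0
    · by_cases hj : j = 0
      · simpa [hj] using hg1 i1
      · simpa [hj] using contDiffOn_const
    · by_cases hj : j = 1
      · simpa [hj] using hg2 i2
      · simpa [hj] using contDiffOn_const
  have hhsm : ∀ i, ContDiffOn ℝ 1 (fun s => h s i) (Set.Icc a b) := by
    intro i
    have he : (fun s => h s i) = fun s => Sum.elim (f0 s) (g1 s) i := by
      funext s; rw [hh]
    rw [he]
    rcases i with i0 | i1
    · simpa using hf0 i0
    · simpa using hg1 i1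
  -- continuous substitutes for the derivatives
  set Fd : ℝ → Matrix ((Fin p0 ⊕ Fin q1) ⊕ Fin q2) (Fin 2) ℝ :=
    fun t => Matrix.of fun i j => derivWithin (fun s => F s i j) (Set.Icc a b) t with hFddef
  set hd : ℝ → (Fin p0 ⊕ Fin q1) → ℝ :=
    fun t i => derivWithin (fun s => h s i) (Set.Icc a b) t with hhddef
  have hFdcont : ∀ i j, ContinuousOn (fun t => Fd t i j) (Set.Icc a b) :=
    fun i j => (hFsm i j).continuousOn_derivWithin (uniqueDiffOn_Icc hab) le_rfl
  have hdcont : ∀ i, ContinuousOn (fun t => hd t i) (Set.Icc a b) :=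
    fun i => (hhsm i).continuousOn_derivWithin (uniqueDiffOn_Icc hab) le_rfl
  have hFdEq : ∀ t ∈ Set.Ioo a b, Fdot t = Fd t := by
    intro t ht
    ext i j
    rw [hFdot]
    exact (derivWithin_of_mem_nhds (Icc_mem_nhds ht.1 ht.2)).symm
  have hdEq : ∀ t ∈ Set.Ioo a b, hdot t = hd t := by
    intro t ht
    funext i
    rw [hhdot]
    exact (derivWithin_of_mem_nhds (Icc_mem_nhds ht.1 ht.2)).symm
  -- first-column identities
  have hcol1 : ∀ t k, Fdot t (Sum.inl k) 0 = hdot t k := by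
    intro t k
    have he : (fun s => F s (Sum.inl k) 0) = fun s => h s k := by
      funext s; rw [hF, hh]
      rcases k with i0 | i1 <;> simp
    rw [hFdot, he, hhdot]
  have hcol2 : ∀ t i2, Fdot t (Sum.inr i2) 0 = 0 := by
    intro t i2
    have he : (fun s => F s (Sum.inr i2) 0) = fun _ => (0:ℝ) := by
      funext s; rw [hF]; simp
    rw [hFdot, he, deriv_const]
  have hcolA1 : ∀ k, F a (Sum.inl k) 0 = h a k := by
    intro k; rw [hF, hh]; rcases k with i0 | i1 <;> simp
  have hcolA2 : ∀ i2, F a (Sum.inr i2) 0 = 0 := by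
    intro i2; rw [hF]; simp
  -- symmetry of Sig⁻¹
  have hSigsymm : Sigᵀ = Sig := by
    rw [hSig]
    ext i j
    fin_cases i <;> fin_cases j <;> rfl
  have hSinv : (Sig⁻¹)ᵀ = Sig⁻¹ := by
    rw [Matrix.transpose_nonsing_inv, hSigsymm]
  -- pointwise quadratic inequality for Sig⁻¹
  have hquadSig : ∀ v : Fin 2 → ℝ, (v 0)^2 ≤ σ1^2 * (v ⬝ᵥ (Sig⁻¹ *ᵥ v)) := by
    intro v; rw [hSig]; exact sig_quad σ1 σ2 ρ hσ1 hσ2 hρ v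
  -- sandwich identity for quadratic forms
  have hsand : ∀ (z : ((Fin p0 ⊕ Fin q1) ⊕ Fin q2) → ℝ)
      (N : Matrix ((Fin p0 ⊕ Fin q1) ⊕ Fin q2) (Fin 2) ℝ),
      z ⬝ᵥ ((N * Sig⁻¹ * Nᵀ) *ᵥ z) = (Nᵀ *ᵥ z) ⬝ᵥ (Sig⁻¹ *ᵥ (Nᵀ *ᵥ z)) := by
    intro z N
    rw [← Matrix.mulVec_mulVec, ← Matrix.mulVec_mulVec, Matrix.dotProduct_mulVec,
      ← Matrix.mulVec_transpose]
  have hsandT : ∀ (N : Matrix ((Fin p0 ⊕ Fin q1) ⊕ Fin q2) (Fin 2) ℝ),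
      (N * Sig⁻¹ * Nᵀ)ᵀ = N * Sig⁻¹ * Nᵀ := by
    intro N
    rw [Matrix.transpose_mul, Matrix.transpose_mul, Matrix.transpose_transpose, hSinv,
      Matrix.mul_assoc]
  -- integrability of the entries of the integrand of M
  have hQc : ∀ i j, ContinuousOn (fun t => (Fd t * Sig⁻¹ * (Fd t)ᵀ) i j) (Set.Icc a b) := by
    intro i j
    simp only [Matrix.mul_apply, Matrix.transpose_apply]
    refine continuousOn_finset_sum _ fun k _ => ContinuousOn.mul ?_ (hFdcont j k)
    exact continuousOn_finset_sum _ fun l _ => (hFdcont i l).mul continuousOn_const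
  have hQint : ∀ i j, IntervalIntegrable
      (fun t => (Fdot t * Sig⁻¹ * (Fdot t)ᵀ) i j) volume a b :=
    fun i j => intInt_of_eqOn_Ioo habl (hQc i j) (fun t ht => by rw [hFdEq t ht])
  have hM1int : ∀ i j, IntervalIntegrable
      (fun t => Matrix.vecMulVec (hdot t) (hdot t) i j) volume a b := by
    intro i j
    refine intInt_of_eqOn_Ioo habl ((hdcont i).mul (hdcont j)) (fun t ht => ?_)
    rw [Matrix.vecMulVec_apply, hdEq t ht]
    rfl
  -- quadratic-form decomposition of M1
  have hM1quad : ∀ w : (Fin p0 ⊕ Fin q1) → ℝ, w ⬝ᵥ (M1 *ᵥ w)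
      = (∫ t in a..b, (hdot t ⬝ᵥ w)^2) + (1/a) * (h a ⬝ᵥ w)^2 := by
    intro w
    rw [hM1, Matrix.add_mulVec, dotProduct_add]
    have e1 : (Matrix.of fun i j => ∫ t in a..b, hdot t i * hdot t j)
        = (Matrix.of fun i j => ∫ t in a..b, Matrix.vecMulVec (hdot t) (hdot t) i j) := by
      ext i j; simp [Matrix.vecMulVec_apply]
    rw [e1, quad_integral _ hM1int w]
    congr 1
    · exact intervalIntegral.integral_congr fun t _ => vecMulVec_quad _ _
    · rw [Matrix.smul_mulVec, dotProduct_smul, smul_eq_mul, vecMulVec_quad]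
  -- M1 is positive semidefinite
  have hM1psd : ∀ w : (Fin p0 ⊕ Fin q1) → ℝ, 0 ≤ w ⬝ᵥ (M1 *ᵥ w) := by
    intro w
    rw [hM1quad w]
    have h1 : 0 ≤ ∫ t in a..b, (hdot t ⬝ᵥ w)^2 :=
      intervalIntegral.integral_nonneg habl (fun u _ => sq_nonneg _)
    have h2 : 0 ≤ (1/a) * (h a ⬝ᵥ w)^2 := by positivity
    linarith
  -- the key comparison inequality
  have key1 : ∀ z : ((Fin p0 ⊕ Fin q1) ⊕ Fin q2) → ℝ,
      (z ∘ Sum.inl) ⬝ᵥ (M1 *ᵥ (z ∘ Sum.inl)) ≤ σ1^2 * (z ⬝ᵥ (M *ᵥ z)) := by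
    intro z
    set z1 : (Fin p0 ⊕ Fin q1) → ℝ := z ∘ Sum.inl with hz1
    have hw0 : ∀ t, ((Fdot t)ᵀ *ᵥ z) 0 = hdot t ⬝ᵥ z1 := by
      intro t
      simp only [Matrix.mulVec, Matrix.transpose_apply, dotProduct,
        Fintype.sum_sum_type, hcol1, hcol2, zero_mul, Finset.sum_const_zero, add_zero, hz1,
        Function.comp_apply]
    have hva0 : ((F a)ᵀ *ᵥ z) 0 = h a ⬝ᵥ z1 := by
      simp only [Matrix.mulVec, Matrix.transpose_apply, dotProduct,
        Fintype.sum_sum_type, hcolA1, hcolA2, zero_mul, Finset.sum_const_zero, add_zero, hz1,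
        Function.comp_apply]
    have hMq : z ⬝ᵥ (M *ᵥ z)
        = (∫ t in a..b, z ⬝ᵥ ((Fdot t * Sig⁻¹ * (Fdot t)ᵀ) *ᵥ z))
          + (1/a) * (z ⬝ᵥ ((F a * Sig⁻¹ * (F a)ᵀ) *ᵥ z)) := by
      rw [hM, Matrix.add_mulVec, dotProduct_add, quad_integral _ hQint z,
        Matrix.smul_mulVec, dotProduct_smul, smul_eq_mul]
    have hle1 : (∫ t in a..b, (hdot t ⬝ᵥ z1)^2)
        ≤ σ1^2 * ∫ t in a..b, z ⬝ᵥ ((Fdot t * Sig⁻¹ * (Fdot t)ᵀ) *ᵥ z) := by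
      rw [← intervalIntegral.integral_const_mul]
      have hdz : ContinuousOn (fun t => hd t ⬝ᵥ z1) (Set.Icc a b) := by
        simp only [dotProduct]
        exact continuousOn_finset_sum _ fun k _ => (hdcont k).mul continuousOn_const
      have hQzc : ContinuousOn (fun t => z ⬝ᵥ ((Fd t * Sig⁻¹ * (Fd t)ᵀ) *ᵥ z))
          (Set.Icc a b) := by
        simp only [dotProduct, Matrix.mulVec]
        refine continuousOn_finset_sum _ fun i _ => ContinuousOn.mul continuousOn_const ?_
        exact continuousOn_finset_sum _ fun j _ => (hQc i j).mul continuousOn_const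
      refine intervalIntegral.integral_mono_on habl ?_ ?_ ?_
      · exact intInt_of_eqOn_Ioo habl
          (g := fun t => (hd t ⬝ᵥ z1)^2) (hdz.pow 2) (fun t ht => by rw [hdEq t ht])
      · exact intInt_of_eqOn_Ioo habl
          (g := fun t => σ1^2 * (z ⬝ᵥ ((Fd t * Sig⁻¹ * (Fd t)ᵀ) *ᵥ z)))
          (continuousOn_const.mul hQzc) (fun t ht => by rw [hFdEq t ht])
      · intro t _
        rw [hsand z (Fdot t)]
        have hv := hquadSig ((Fdot t)ᵀ *ᵥ z)
        rwa [hw0 t] at hv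
    have hle2 : (1/a) * (h a ⬝ᵥ z1)^2
        ≤ (1/a) * (σ1^2 * (z ⬝ᵥ ((F a * Sig⁻¹ * (F a)ᵀ) *ᵥ z))) := by
      refine mul_le_mul_of_nonneg_left ?_ (by positivity)
      rw [hsand z (F a)]
      have hv := hquadSig ((F a)ᵀ *ᵥ z)
      rwa [hva0] at hv
    rw [hMq, hM1quad z1, mul_add]
    have : σ1 ^ 2 * ((1/a) * (z ⬝ᵥ ((F a * Sig⁻¹ * (F a)ᵀ) *ᵥ z)))
        = (1/a) * (σ1^2 * (z ⬝ᵥ ((F a * Sig⁻¹ * (F a)ᵀ) *ᵥ z))) := by ring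
    rw [this]
    exact add_le_add hle1 hle2
  -- symmetry of M, M1 and their inverses
  have hMsymm : Mᵀ = M := by
    rw [hM, Matrix.transpose_add, Matrix.transpose_smul]
    congr 1
    · ext i j
      simp only [Matrix.transpose_apply, Matrix.of_apply]
      refine intervalIntegral.integral_congr fun t _ => ?_
      conv_rhs => rw [← hsandT (Fdot t)]
      rfl
    · rw [hsandT]
  have hM1symm : M1ᵀ = M1 := by
    rw [hM1, Matrix.transpose_add, Matrix.transpose_smul]
    congr 1
    · ext i j
      simp only [Matrix.transpose_apply, Matrix.of_apply]
      exact intervalIntegral.integral_congr fun t _ => mul_comm _ _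
    · ext i j
      simp [Matrix.vecMulVec_apply, mul_comm]
  have hMdet : IsUnit M.det := (Matrix.isUnit_iff_isUnit_det M).1 hMunit
  have hM1det : IsUnit M1.det := (Matrix.isUnit_iff_isUnit_det M1).1 hM1unit
  have hMinv_symm : (M⁻¹)ᵀ = M⁻¹ := by rw [Matrix.transpose_nonsing_inv, hMsymm]
  have hM1inv_symm : (M1⁻¹)ᵀ = M1⁻¹ := by rw [Matrix.transpose_nonsing_inv, hM1symm]
  rw [Matrix.posSemidef_iff_dotProduct_mulVec]
  constructor
  · -- Hermitian part
    have hD : (σ1^2 • M1⁻¹ - (M⁻¹).toBlocks₁₁)ᵀ = σ1^2 • M1⁻¹ - (M⁻¹).toBlocks₁₁ := by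
      rw [Matrix.transpose_sub, Matrix.transpose_smul, hM1inv_symm]
      congr 1
      ext i j
      simp only [Matrix.transpose_apply, Matrix.toBlocks₁₁, Matrix.of_apply]
      conv_lhs => rw [← hMinv_symm]
      rfl
    ext i j
    rw [Matrix.conjTranspose_apply, star_trivial]
    exact congrFun (congrFun hD i) j
  · -- quadratic form part
    intro x
    rw [star_trivial]
    set y : ((Fin p0 ⊕ Fin q1) ⊕ Fin q2) → ℝ := Sum.elim x (fun _ => 0) with hy
    set zz : ((Fin p0 ⊕ Fin q1) ⊕ Fin q2) → ℝ := M⁻¹ *ᵥ y with hzz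
    set zo : (Fin p0 ⊕ Fin q1) → ℝ := zz ∘ Sum.inl with hzo
    set w : (Fin p0 ⊕ Fin q1) → ℝ := M1⁻¹ *ᵥ x with hwdef
    have claimA : x ⬝ᵥ ((M⁻¹).toBlocks₁₁ *ᵥ x) = y ⬝ᵥ zz := by
      rw [hzz]
      simp only [dotProduct, Matrix.mulVec, Matrix.toBlocks₁₁, Matrix.of_apply,
        Fintype.sum_sum_type, hy, Sum.elim_inl, Sum.elim_inr, zero_mul, mul_zero,
        Finset.sum_const_zero, add_zero]
    have claimB : M *ᵥ zz = y := by
      rw [hzz, Matrix.mulVec_mulVec, Matrix.mul_nonsing_inv M hMdet, Matrix.one_mulVec]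
    have claimC : y ⬝ᵥ zz = x ⬝ᵥ zo := by
      simp only [dotProduct, Fintype.sum_sum_type, hy, Sum.elim_inl, Sum.elim_inr,
        zero_mul, Finset.sum_const_zero, add_zero, hzo, Function.comp_apply]
    have hM1w : M1 *ᵥ w = x := by
      rw [hwdef, Matrix.mulVec_mulVec, Matrix.mul_nonsing_inv M1 hM1det, Matrix.one_mulVec]
    have hsq := hM1psd (zo - σ1^2 • w)
    have expand : (zo - σ1^2 • w) ⬝ᵥ (M1 *ᵥ (zo - σ1^2 • w))
        = zo ⬝ᵥ (M1 *ᵥ zo) - 2*(σ1^2*(x ⬝ᵥ zo)) + σ1^2*(σ1^2*(x ⬝ᵥ w)) := by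
      rw [Matrix.mulVec_sub, dotProduct_sub, sub_dotProduct,
        sub_dotProduct, Matrix.mulVec_smul, dotProduct_smul,
        smul_dotProduct, smul_dotProduct, dotProduct_smul, hM1w]
      have e1 : zo ⬝ᵥ x = x ⬝ᵥ zo := dotProduct_comm _ _
      have e2 : w ⬝ᵥ (M1 *ᵥ zo) = x ⬝ᵥ zo := by
        rw [Matrix.dotProduct_mulVec, ← Matrix.mulVec_transpose, hM1symm, hM1w]
      have e3 : w ⬝ᵥ x = x ⬝ᵥ w := dotProduct_comm _ _
      rw [e1, e2, e3]
      simp only [smul_eq_mul]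
      ring
    have hkey := key1 zz
    rw [claimB] at hkey
    have hyz : zz ⬝ᵥ y = x ⬝ᵥ zo := by rw [dotProduct_comm, claimC]
    rw [hyz] at hkey
    -- hkey : zo ⬝ᵥ (M1 *ᵥ zo) ≤ σ1^2 * (x ⬝ᵥ zo)  (note zz ∘ inl = zo)
    have h7 : 0 ≤ σ1^2 * (σ1^2 * (x ⬝ᵥ w) - x ⬝ᵥ zo) := by nlinarith [hsq, expand, hkey]
    have h8 : 0 ≤ σ1^2 * (x ⬝ᵥ w) - x ⬝ᵥ zo :=
      nonneg_of_mul_nonneg_right h7 (pow_pos hσ1 2)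
    rw [Matrix.sub_mulVec, dotProduct_sub, Matrix.smul_mulVec,
      dotProduct_smul, smul_eq_mul, claimA, claimC]
    linarith [h8]
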